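/- Consider the binary (divide-and-conquer) semi-naive evaluation of transitive closure on a finite directed graph (V,E): δT^0 = E, T^0 = E, and for i ≥ 1, δT^i = {(x,y) ∉ T^{i-1} : ∃z, ((x,z) ∈ δT^{i-1} ∧ (z,y) ∈ T^{i-1}) ∨ ((x,z) ∈ T^{i-1} ∧ (z,y) ∈ δT^{i-1})}, with T^i = T^{i-1} ∪ δT^i. Then for every i ≥ 0, T^i equals the set of pairs connected by an E-path of length between 1 and 2^i. Consequently the fixpoint, equal to the transitive closure of E, is reached after at most ⌈log2 d⌉ iterations, where d is the maximum over connected pairs of the shortest E-path length. -/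
import Mathlib


/-- An unlabeled path of a given length. -/
def lenPath {V : Type*} (P : V → V → Prop) : ℕ → V → V → Prop
  | 0, v, u => u = v
  | k + 1, v, u => ∃ z, P v z ∧ lenPath P k z u

/-- One step of semi-naive evaluation of the binary (divide-and-conquer)
formulation of transitive closure: `semiNaiveBin E i = (δT^i, T^i)`. -/
def semiNaiveBin {V : Type*} (E : V → V → Prop) : ℕ → (V → V → Prop) × (V → V → Prop)
  | 0 => (E, E)
  | i + 1 =>
    let d := (semiNaiveBin E i).1
    let t := (semiNaiveBin E i).2
    let d' := fun x y =>
      (∃ z, (d x z ∧ t z y) ∨ (t x z ∧ d z y)) ∧ ¬ t x y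
    (d', fun x y => t x y ∨ d' x y)

lemma lenPath_trans {V : Type*} {E : V → V → Prop} :
    ∀ {a b : ℕ} {x z y : V}, lenPath E a x z → lenPath E b z y → lenPath E (a + b) x y := by
  intro a
  induction a with
  | zero => intro b x z y h1 h2; cases h1; simpa using h2
  | succ n ih =>
    intro b x z y h1 h2
    obtain ⟨w, hw, hp⟩ := h1
    rw [Nat.succ_add]
    exact ⟨w, hw, ih hp h2⟩

lemma lenPath_split {V : Type*} {E : V → V → Prop} :
    ∀ {a b : ℕ} {x y : V}, lenPath E (a + b) x y → ∃ z, lenPath E a x z ∧ lenPath E b z y := by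
  intro a
  induction a with
  | zero => intro b x y h; exact ⟨x, rfl, by simpa using h⟩
  | succ n ih =>
    intro b x y h
    rw [Nat.succ_add] at h
    obtain ⟨w, hw, hp⟩ := h
    obtain ⟨z, h1, h2⟩ := ih hp
    exact ⟨z, ⟨w, hw, h1⟩, h2⟩

lemma lenPath_transGen {V : Type*} {E : V → V → Prop} :
    ∀ (k : ℕ) {x y : V}, lenPath E (k + 1) x y → Relation.TransGen E x y := by
  intro k
  induction k with
  | zero =>
    rintro x y ⟨z, hz, hp⟩
    cases hp
    exact Relation.TransGen.single hz
  | succ n ih =>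
    rintro x y ⟨z, hz, hp⟩
    exact Relation.TransGen.head hz (ih hp)

lemma delta_subset {V : Type*} (E : V → V → Prop) :
    ∀ (i : ℕ) (x y : V), (semiNaiveBin E i).1 x y → (semiNaiveBin E i).2 x y := by
  intro i x y h
  cases i with
  | zero => exact h
  | succ n => exact Or.inr h

lemma semiNaiveBin_char {V : Type*} (E : V → V → Prop) :
    ∀ (i : ℕ) (x y : V),
      (semiNaiveBin E i).2 x y ↔ ∃ k : ℕ, 1 ≤ k ∧ k ≤ 2 ^ i ∧ lenPath E k x y := by
  intro i
  induction i using Nat.strong_induction_on with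
  | _ i ih =>
    match i with
    | 0 =>
      intro x y
      constructor
      · intro h
        exact ⟨1, le_refl 1, by norm_num, y, h, rfl⟩
      · rintro ⟨k, hk1, hk2, hp⟩
        interval_cases k
        obtain ⟨z, hz, hy⟩ := hp
        cases hy
        exact hz
    | j + 1 =>
      intro x y
      have ihj := ih j (Nat.lt_succ_self j)
      constructor
      · rintro (h | ⟨⟨z, h⟩, -⟩)
        · obtain ⟨k, hk1, hk2, hp⟩ := (ihj x y).mp h
          exact ⟨k, hk1, hk2.trans (Nat.pow_le_pow_right (by norm_num) (Nat.le_succ j)), hp⟩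
        · have hzz : (semiNaiveBin E j).2 x z ∧ (semiNaiveBin E j).2 z y := by
            rcases h with ⟨h1, h2⟩ | ⟨h1, h2⟩
            · exact ⟨delta_subset E j x z h1, h2⟩
            · exact ⟨h1, delta_subset E j z y h2⟩
          obtain ⟨a, ha1, ha2, hpa⟩ := (ihj x z).mp hzz.1
          obtain ⟨b, hb1, hb2, hpb⟩ := (ihj z y).mp hzz.2
          refine ⟨a + b, le_trans ha1 (Nat.le_add_right a b), ?_, lenPath_trans hpa hpb⟩
          calc a + b ≤ 2 ^ j + 2 ^ j := Nat.add_le_add ha2 hb2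
            _ = 2 ^ (j + 1) := by ring
      · rintro ⟨k, hk1, hk2, hp⟩
        by_cases hkj : k ≤ 2 ^ j
        · exact Or.inl ((ihj x y).mpr ⟨k, hk1, hkj, hp⟩)
        by_cases ht : (semiNaiveBin E j).2 x y
        · exact Or.inl ht
        push_neg at hkj
        -- split the path at position 2^j
        have hsplit : 2 ^ j + (k - 2 ^ j) = k := Nat.add_sub_cancel' hkj.le
        have hp' : lenPath E (2 ^ j + (k - 2 ^ j)) x y := by rwa [hsplit]
        obtain ⟨z, hxz, hzy⟩ := lenPath_split hp'
        have hpow : (2 : ℕ) ^ (j + 1) = 2 ^ j + 2 ^ j := by ring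
        have hb1 : 1 ≤ k - 2 ^ j := by omega
        have hb2 : k - 2 ^ j ≤ 2 ^ j := by omega
        have htxz : (semiNaiveBin E j).2 x z :=
          (ihj x z).mpr ⟨2 ^ j, Nat.one_le_two_pow, le_refl _, hxz⟩
        have htzy : (semiNaiveBin E j).2 z y :=
          (ihj z y).mpr ⟨k - 2 ^ j, hb1, hb2, hzy⟩
        refine Or.inr ⟨⟨z, ?_⟩, ht⟩
        cases j with
        | zero => exact Or.inl ⟨htxz, htzy⟩
        | succ m =>
          have ihm := ih m (by omega)
          rcases htxz with hxz' | hdxz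
          · rcases htzy with hzy' | hdzy
            · -- both in T^m : contradiction with ¬ T^{m+1} x y
              exfalso
              obtain ⟨a, ha1, ha2, hpa⟩ := (ihm x z).mp hxz'
              obtain ⟨b, hb1', hb2', hpb⟩ := (ihm z y).mp hzy'
              exact ht ((ihj x y).mpr ⟨a + b, le_trans ha1 (Nat.le_add_right a b),
                by calc a + b ≤ 2 ^ m + 2 ^ m := Nat.add_le_add ha2 hb2'
                  _ = 2 ^ (m + 1) := by ring, lenPath_trans hpa hpb⟩)
            · exact Or.inr ⟨Or.inl hxz', hdzy⟩
          · exact Or.inl ⟨hdxz, htzy⟩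

theorem stmt_13 {V : Type*} [Fintype V] (E : V → V → Prop) :
    (∀ (i : ℕ) (x y : V),
      (semiNaiveBin E i).2 x y ↔ ∃ k : ℕ, 1 ≤ k ∧ k ≤ 2 ^ i ∧ lenPath E k x y) ∧
    (∀ d : ℕ,
      (∀ x y : V, Relation.TransGen E x y → ∃ k : ℕ, 1 ≤ k ∧ k ≤ d ∧ lenPath E k x y) →
      ∀ x y : V, (semiNaiveBin E (Nat.clog 2 d)).2 x y ↔ Relation.TransGen E x y) := by
  refine ⟨semiNaiveBin_char E, ?_⟩
  intro d hd x y
  constructor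
  · intro h
    obtain ⟨k, hk1, -, hp⟩ := (semiNaiveBin_char E _ x y).mp h
    obtain ⟨m, rfl⟩ : ∃ m, k = m + 1 := ⟨k - 1, by omega⟩
    exact lenPath_transGen m hp
  · intro h
    obtain ⟨k, hk1, hkd, hp⟩ := hd x y h
    exact (semiNaiveBin_char E _ x y).mpr
      ⟨k, hk1, hkd.trans (Nat.le_pow_clog one_lt_two d), hp⟩
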